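/- Suppose that for every ξ ∈ S¹, either P†(ξ) = 0 (as a vector in ℝ³) or σ(ξ) = 0. Then the star configuration is symmetric: m is even and there exists a fixed-point-free involution τ of {1, …, m} such that γ_{τ(i)} = −γ_i and c_{τ(i)} = c_i for all i. (Algebraic core of the theorem that a star transform on symmetric 2-tensor fields is invertible if and only if it is not symmetric.) -/

import Mathlib

noncomputable section

open MeasureTheory

/-- Dot product in `ℝ²`. -/
def dot2 (a b : ℝ × ℝ) : ℝ := a.1 * b.1 + a.2 * b.2

/-- The rotation `w ↦ w^⊥ = (−w2, w1)`. -/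
def perp2 (w : ℝ × ℝ) : ℝ × ℝ := (-w.2, w.1)

/-- The symmetric tensor `w² = (w1², w1 w2, w2²)`, identified with a vector in `ℝ³`. -/
def tsq (w : ℝ × ℝ) : Fin 3 → ℝ := ![w.1 ^ 2, w.1 * w.2, w.2 ^ 2]

/-- The symmetric tensor `w ⊙ w^⊥ = (−w1 w2, (w1² − w2²)/2, w1 w2)`. -/
def todot (w : ℝ × ℝ) : Fin 3 → ℝ := ![-(w.1 * w.2), (w.1 ^ 2 - w.2 ^ 2) / 2, w.1 * w.2]

/-- The vector `γ(ξ) = −Σᵢ cᵢ γᵢ² / (ξ·γᵢ)`. -/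
def gammaVec (m : ℕ) (γ : Fin m → ℝ × ℝ) (c : Fin m → ℝ) (ξ : ℝ × ℝ) : Fin 3 → ℝ :=
  -∑ i : Fin m, (c i / dot2 ξ (γ i)) • tsq (γ i)

/-- The vector `γ†(ξ) = −Σᵢ cᵢ (γᵢ ⊙ γᵢ^⊥) / (ξ·γᵢ)`. -/
def gammaDag (m : ℕ) (γ : Fin m → ℝ × ℝ) (c : Fin m → ℝ) (ξ : ℝ × ℝ) : Fin 3 → ℝ :=
  -∑ i : Fin m, (c i / dot2 ξ (γ i)) • todot (γ i)

/-- The vector `γ^⊥(ξ) = −Σᵢ cᵢ (γᵢ^⊥)² / (ξ·γᵢ)`. -/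
def gammaPerp (m : ℕ) (γ : Fin m → ℝ × ℝ) (c : Fin m → ℝ) (ξ : ℝ × ℝ) : Fin 3 → ℝ :=
  -∑ i : Fin m, (c i / dot2 ξ (γ i)) • tsq (perp2 (γ i))

/-- `κᵢ(ξ) = ∏_{j ≠ i} (ξ·γⱼ)`. -/
def kappaI (m : ℕ) (γ : Fin m → ℝ × ℝ) (i : Fin m) (ξ : ℝ × ℝ) : ℝ :=
  ∏ j ∈ Finset.univ.erase i, dot2 ξ (γ j)

/-- The `ℝ³`-valued polynomial `P†(ξ) = Σᵢ cᵢ κᵢ(ξ) (γᵢ ⊙ γᵢ^⊥)`. -/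
def Pdag (m : ℕ) (γ : Fin m → ℝ × ℝ) (c : Fin m → ℝ) (ξ : ℝ × ℝ) : Fin 3 → ℝ :=
  ∑ i : Fin m, (c i * kappaI m γ i ξ) • todot (γ i)

/-- The scalar polynomial `σ(ξ) = Σᵢ cᵢ κᵢ(ξ)`. -/
def sigmaP (m : ℕ) (γ : Fin m → ℝ × ℝ) (c : Fin m → ℝ) (ξ : ℝ × ℝ) : ℝ :=
  ∑ i : Fin m, c i * kappaI m γ i ξ

section StarAux
open Filter Topology Finset

/-- The curve `t ↦ cos t · e^⊥ + sin t · e` on the unit circle. -/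
def xiC (e : ℝ × ℝ) (t : ℝ) : ℝ × ℝ :=
  (Real.cos t * (-e.2) + Real.sin t * e.1, Real.cos t * e.1 + Real.sin t * e.2)

lemma xiC_unit (e : ℝ × ℝ) (he : e.1 ^ 2 + e.2 ^ 2 = 1) (t : ℝ) :
    (xiC e t).1 ^ 2 + (xiC e t).2 ^ 2 = 1 := by
  have h := Real.sin_sq_add_cos_sq t
  simp only [xiC]
  nlinarith [h, he]

lemma xiC_zero (e : ℝ × ℝ) : xiC e 0 = perp2 e := by
  simp [xiC, perp2]

lemma unit_perp_eq (e v : ℝ × ℝ) (he : e.1 ^ 2 + e.2 ^ 2 = 1)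
    (hv : v.1 ^ 2 + v.2 ^ 2 = 1) (h : dot2 (perp2 e) v = 0) : v = e ∨ v = -e := by
  simp only [dot2, perp2] at h
  have h1 : v.1 = (e.1 * v.1 + e.2 * v.2) * e.1 := by linear_combination -v.1 * he - e.2 * h
  have h2 : v.2 = (e.1 * v.1 + e.2 * v.2) * e.2 := by linear_combination -v.2 * he + e.1 * h
  set s := e.1 * v.1 + e.2 * v.2 with hs
  have hsq : (s - 1) * (s + 1) = 0 := by
    linear_combination (-(v.1 + s*e.1))*h1 + (-(v.2 + s*e.2))*h2 + hv - s^2*he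
  rcases mul_eq_zero.1 hsq with h' | h'
  · left
    have : s = 1 := by linarith
    rw [this, one_mul] at h1 h2
    exact Prod.ext h1 h2
  · right
    have : s = -1 := by linarith
    rw [this] at h1 h2
    exact Prod.ext (by simpa using h1) (by simpa using h2)

lemma todot_neg (e : ℝ × ℝ) : todot (-e) = todot e := by
  funext k
  fin_cases k <;> simp [todot]

lemma exists_todot_ne (e : ℝ × ℝ) (he : e.1 ^ 2 + e.2 ^ 2 = 1) :
    ∃ k, todot e k ≠ 0 := by
  by_cases h : e.1 * e.2 = 0
  · refine ⟨1, ?_⟩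
    simp only [todot, Matrix.cons_val_one, Matrix.head_cons, Matrix.cons_val_zero]
    rcases mul_eq_zero.1 h with h' | h' <;>
      · intro hcon
        nlinarith [he, hcon]
  · exact ⟨2, by simpa [todot] using h⟩

lemma even_card_of_invol {α : Type*} [DecidableEq α] (f : α → α) :
    ∀ s : Finset α, (∀ a ∈ s, f a ∈ s) → (∀ a ∈ s, f (f a) = a) → (∀ a ∈ s, f a ≠ a) →
      Even s.card := by
  intro s
  induction s using Finset.strongInduction with
  | _ s ih =>
    intro h1 h2 h3
    rcases s.eq_empty_or_nonempty with rfl | ⟨a, ha⟩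
    · simp
    · have hfa : f a ∈ s := h1 a ha
      have hfa' : f a ∈ s.erase a := Finset.mem_erase.2 ⟨h3 a ha, hfa⟩
      have hts : (s.erase a).erase (f a) ⊂ s :=
        Finset.ssubset_of_subset_of_ssubset (Finset.erase_subset _ _) (Finset.erase_ssubset ha)
      have heven : Even ((s.erase a).erase (f a)).card := by
        refine ih _ hts ?_ ?_ ?_
        · intro b hb
          obtain ⟨hbfa, hb'⟩ := Finset.mem_erase.1 hb
          obtain ⟨hba, hbs⟩ := Finset.mem_erase.1 hb'
          refine Finset.mem_erase.2 ⟨?_, Finset.mem_erase.2 ⟨?_, h1 b hbs⟩⟩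
          · intro hcon
            exact hba (by rw [← h2 b hbs, hcon, h2 a ha])
          · intro hcon
            exact hbfa (by rw [← h2 b hbs, hcon])
        · intro b hb
          exact h2 b (Finset.mem_of_mem_erase (Finset.mem_of_mem_erase hb))
        · intro b hb
          exact h3 b (Finset.mem_of_mem_erase (Finset.mem_of_mem_erase hb))
      have hcard2 : 1 < s.card := Finset.one_lt_card.2 ⟨a, ha, f a, hfa, (h3 a ha).symm⟩
      have : s.card = ((s.erase a).erase (f a)).card + 2 := by
        rw [Finset.card_erase_of_mem hfa', Finset.card_erase_of_mem ha]
        omega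
      rw [this]
      exact heven.add even_two

end StarAux

open Filter Topology Finset in
lemma key_lemma (m : ℕ) (γ : Fin m → ℝ × ℝ) (c : Fin m → ℝ) (i j : Fin m)
    (hui : (γ i).1 ^ 2 + (γ i).2 ^ 2 = 1)
    (hij : j ≠ i) (hγj : γ j = -γ i)
    (hperp : ∀ k, k ≠ i → k ≠ j → dot2 (perp2 (γ i)) (γ k) ≠ 0)
    (w : Fin m → ℝ) (hwj : w j = w i) (hwi : w i ≠ 0)
    (hvan : ∃ᶠ t in 𝓝[≠] (0:ℝ), ∑ l, c l * kappaI m γ l (xiC (γ i) t) * w l = 0) :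
    c j = c i := by
  classical
  set e := γ i with he
  set d : ℝ → Fin m → ℝ := fun t k => dot2 (xiC e t) (γ k) with hd
  have hdc : ∀ k, Continuous fun t => d t k := by
    intro k
    simp only [hd, dot2, xiC]
    fun_prop
  have hdi : ∀ t, d t i = Real.sin t := by
    intro t
    simp only [hd, dot2, xiC, ← he]
    linear_combination (Real.sin t) * hui
  have hdj : ∀ t, d t j = -Real.sin t := by
    intro t
    simp only [hd, dot2, xiC, hγj, Prod.fst_neg, Prod.snd_neg, ← he]
    linear_combination (-Real.sin t) * hui
  have hκ : ∀ l t, kappaI m γ l (xiC e t) = ∏ k ∈ univ.erase l, d t k := fun l t => rfl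
  have hj_mem : j ∈ (univ : Finset (Fin m)).erase i := mem_erase.2 ⟨hij, mem_univ j⟩
  set A : ℝ → ℝ := fun t => ∏ k ∈ (univ.erase i).erase j, d t k with hA
  set S : ℝ → ℝ := fun t =>
    ∑ l ∈ (univ.erase i).erase j,
      c l * (∏ k ∈ ((univ.erase l).erase i).erase j, d t k) * w l with hS
  set g : ℝ → ℝ := fun t => (c j - c i) * A t * w i - Real.sin t * S t with hg
  have hκi : ∀ t, kappaI m γ i (xiC e t) = -Real.sin t * A t := by
    intro t
    rw [hκ]
    simp only [hA]
    rw [← Finset.mul_prod_erase _ _ hj_mem, hdj]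
  have hκj : ∀ t, kappaI m γ j (xiC e t) = Real.sin t * A t := by
    intro t
    have hi_mem : i ∈ (univ : Finset (Fin m)).erase j := mem_erase.2 ⟨Ne.symm hij, mem_univ i⟩
    rw [hκ]
    simp only [hA]
    rw [← Finset.mul_prod_erase _ _ hi_mem, hdi, Finset.erase_right_comm]
  have hκl : ∀ t, ∀ l ∈ (univ : Finset (Fin m)).erase i |>.erase j,
      kappaI m γ l (xiC e t)
        = Real.sin t * (-Real.sin t) * ∏ k ∈ ((univ.erase l).erase i).erase j, d t k := by
    intro t l hl
    obtain ⟨hlj, hl'⟩ := mem_erase.1 hl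
    obtain ⟨hli, _⟩ := mem_erase.1 hl'
    have hi_mem : i ∈ (univ : Finset (Fin m)).erase l :=
      mem_erase.2 ⟨fun hcon => hli hcon.symm, mem_univ i⟩
    have hj_mem2 : j ∈ ((univ : Finset (Fin m)).erase l).erase i :=
      mem_erase.2 ⟨hij, mem_erase.2 ⟨fun hcon => hlj hcon.symm, mem_univ j⟩⟩
    rw [hκ, ← Finset.mul_prod_erase _ _ hi_mem, ← Finset.mul_prod_erase _ _ hj_mem2, hdi, hdj]
    ring
  have hfact : ∀ t, ∑ l, c l * kappaI m γ l (xiC e t) * w l = Real.sin t * g t := by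
    intro t
    have h1 : ∑ l, c l * kappaI m γ l (xiC e t) * w l
        = c i * kappaI m γ i (xiC e t) * w i + (c j * kappaI m γ j (xiC e t) * w j
          + ∑ l ∈ (univ.erase i).erase j, c l * kappaI m γ l (xiC e t) * w l) := by
      rw [Finset.add_sum_erase _ (fun l => c l * kappaI m γ l (xiC e t) * w l) hj_mem,
        Finset.add_sum_erase _ (fun l => c l * kappaI m γ l (xiC e t) * w l) (mem_univ i)]
    have h2 : ∑ l ∈ (univ : Finset (Fin m)).erase i |>.erase j,
        c l * kappaI m γ l (xiC e t) * w l = -(Real.sin t * (Real.sin t * S t)) := by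
      simp only [hS]
      rw [Finset.mul_sum, Finset.mul_sum, ← Finset.sum_neg_distrib]
      refine Finset.sum_congr rfl fun l hl => ?_
      rw [hκl t l hl]
      ring
    rw [h1, hκi, hκj, h2, hwj]
    simp only [hg]
    ring
  have hgc : Continuous g := by
    simp only [hg, hA, hS]
    apply Continuous.sub
    · exact (continuous_const.mul (continuous_finset_prod _ fun k _ => hdc k)).mul continuous_const
    · exact Real.continuous_sin.mul (continuous_finset_sum _ fun l _ =>
        (continuous_const.mul (continuous_finset_prod _ fun k _ => hdc k)).mul continuous_const)
  have hsin_ne : ∀ᶠ t in 𝓝[≠] (0:ℝ), Real.sin t ≠ 0 := by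
    have h1 : Set.Ioo (-Real.pi) Real.pi ∈ 𝓝 (0:ℝ) :=
      Ioo_mem_nhds (neg_lt_zero.2 Real.pi_pos) Real.pi_pos
    have h2 : ∀ᶠ t in 𝓝 (0:ℝ), t ∈ Set.Ioo (-Real.pi) Real.pi :=
      Filter.eventually_of_mem h1 fun x hx => hx
    filter_upwards [h2.filter_mono nhdsWithin_le_nhds, eventually_mem_nhdsWithin] with t ht ht0
    intro hsin
    exact (Set.mem_compl_singleton_iff.1 ht0)
      ((Real.sin_eq_zero_iff_of_lt_of_lt ht.1 ht.2).1 hsin)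
  have hfreqg : ∃ᶠ t in 𝓝[≠] (0:ℝ), g t ∈ ({0} : Set ℝ) := by
    refine (hvan.and_eventually hsin_ne).mono ?_
    rintro t ⟨h0, hne⟩
    have h3 : Real.sin t * g t = 0 := by rw [← hfact t]; exact h0
    rcases mul_eq_zero.1 h3 with h4 | h4
    · exact absurd h4 hne
    · exact h4
  have hg0 : g 0 = 0 := by
    have := mem_closure_of_frequently_of_tendsto hfreqg
      ((hgc.tendsto 0).mono_left nhdsWithin_le_nhds)
    simpa using this
  have hA0 : A 0 ≠ 0 := by
    simp only [hA]
    refine Finset.prod_ne_zero_iff.2 fun k hk => ?_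
    obtain ⟨hkj, hk'⟩ := mem_erase.1 hk
    obtain ⟨hki, _⟩ := mem_erase.1 hk'
    simpa [hd, xiC_zero, he] using hperp k hki hkj
  have hexp : g 0 = (c j - c i) * A 0 * w i := by
    simp only [hg]
    simp
  have hzero : (c j - c i) * A 0 * w i = 0 := by rw [← hexp]; exact hg0
  rcases mul_eq_zero.1 hzero with h4 | h4
  · rcases mul_eq_zero.1 h4 with h5 | h5
    · linarith
    · exact absurd h5 hA0
  · exact absurd h4 hwi

open Filter Topology Finset in
lemma step1_partner (m : ℕ) (γ : Fin m → ℝ × ℝ) (c : Fin m → ℝ)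
    (hunit : ∀ i, (γ i).1 ^ 2 + (γ i).2 ^ 2 = 1)
    (hdist : Function.Injective γ)
    (hc : ∀ i, c i ≠ 0)
    (hsing : ∀ ξ : ℝ × ℝ, ξ.1 ^ 2 + ξ.2 ^ 2 = 1 →
      Pdag m γ c ξ = 0 ∨ sigmaP m γ c ξ = 0)
    (i : Fin m) : ∃ j, γ j = -γ i := by
  classical
  set e := γ i with he
  have hpu : (perp2 e).1 ^ 2 + (perp2 e).2 ^ 2 = 1 := by
    simp only [perp2]
    linarith [hunit i]
  have hz : dot2 (perp2 e) (γ i) = 0 := by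
    simp only [dot2, perp2, ← he]
    ring
  have hcross : ∀ b : Fin m, b ≠ i → kappaI m γ b (perp2 e) = 0 := by
    intro b hb
    exact Finset.prod_eq_zero (mem_erase.2 ⟨Ne.symm hb, mem_univ i⟩) hz
  have hkz : kappaI m γ i (perp2 e) = 0 := by
    rcases hsing (perp2 e) hpu with hP | hσ
    · obtain ⟨k₀, hk₀⟩ := exists_todot_ne e (hunit i)
      have h1 : Pdag m γ c (perp2 e) k₀ = 0 := by rw [hP]; rfl
      have h2 : Pdag m γ c (perp2 e) k₀ = (c i * kappaI m γ i (perp2 e)) * todot e k₀ := by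
        unfold Pdag
        rw [Finset.sum_apply]
        rw [Finset.sum_eq_single i]
        · simp [he]
        · intro b _ hb
          simp [hcross b hb]
        · intro h
          exact absurd (mem_univ i) h
      rw [h2] at h1
      rcases mul_eq_zero.1 h1 with h3 | h3
      · rcases mul_eq_zero.1 h3 with h4 | h4
        · exact absurd h4 (hc i)
        · exact h4
      · exact absurd h3 hk₀
    · have h2 : sigmaP m γ c (perp2 e) = c i * kappaI m γ i (perp2 e) := by
        unfold sigmaP
        rw [Finset.sum_eq_single i]
        · intro b _ hb
          simp [hcross b hb]
        · intro h
          exact absurd (mem_univ i) h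
      rw [h2] at hσ
      rcases mul_eq_zero.1 hσ with h3 | h3
      · exact absurd h3 (hc i)
      · exact h3
  obtain ⟨k, hk, hk0⟩ := Finset.prod_eq_zero_iff.1 hkz
  have hk_ne : k ≠ i := (mem_erase.1 hk).1
  rcases unit_perp_eq e (γ k) (hunit i) (hunit k) hk0 with h | h
  · exact absurd (hdist h) hk_ne
  · exact ⟨k, h⟩

open Filter Topology Finset in
lemma non_invertible_implies_symmetric_aux
    (m : ℕ) (hm : 1 ≤ m) (γ : Fin m → ℝ × ℝ) (c : Fin m → ℝ)
    (hunit : ∀ i, (γ i).1 ^ 2 + (γ i).2 ^ 2 = 1)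
    (hdist : Function.Injective γ)
    (hc : ∀ i, c i ≠ 0)
    (hsing : ∀ ξ : ℝ × ℝ, ξ.1 ^ 2 + ξ.2 ^ 2 = 1 →
      Pdag m γ c ξ = 0 ∨ sigmaP m γ c ξ = 0) :
    Even m ∧
      ∃ τ : Equiv.Perm (Fin m),
        (∀ i, τ (τ i) = i) ∧ (∀ i, τ i ≠ i) ∧
          ∀ i, γ (τ i) = -γ i ∧ c (τ i) = c i := by
  classical
  choose f hf using fun i => step1_partner m γ c hunit hdist hc hsing i
  have hinv : Function.Involutive f := by
    intro i
    apply hdist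
    rw [hf, hf, neg_neg]
  have hne : ∀ i, f i ≠ i := by
    intro i hcon
    have h1 : γ i = -γ i := by rw [← hf i, hcon]
    have h2 : (γ i).1 = -(γ i).1 := by rw [Prod.ext_iff] at h1; exact h1.1
    have h3 : (γ i).2 = -(γ i).2 := by rw [Prod.ext_iff] at h1; exact h1.2
    nlinarith [hunit i]
  have heven : Even m := by
    have h := even_card_of_invol f Finset.univ (fun a _ => mem_univ _)
      (fun a _ => hinv a) (fun a _ => hne a)
    simpa using h
  have hci : ∀ i, c (f i) = c i := by
    intro i
    have hperp : ∀ k, k ≠ i → k ≠ f i → dot2 (perp2 (γ i)) (γ k) ≠ 0 := by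
      intro k hki hkfi hcon
      rcases unit_perp_eq (γ i) (γ k) (hunit i) (hunit k) hcon with h | h
      · exact hki (hdist h)
      · exact hkfi (hdist (h.trans (hf i).symm))
    have hfreq : (∃ᶠ t in 𝓝[≠] (0:ℝ), Pdag m γ c (xiC (γ i) t) = 0)
        ∨ ∃ᶠ t in 𝓝[≠] (0:ℝ), sigmaP m γ c (xiC (γ i) t) = 0 := by
      rw [← frequently_or_distrib]
      exact Filter.Eventually.frequently
        (Filter.Eventually.of_forall fun t => hsing _ (xiC_unit _ (hunit i) t))
    rcases hfreq with hP | hσ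
    · obtain ⟨k₀, hk₀⟩ := exists_todot_ne (γ i) (hunit i)
      refine key_lemma m γ c i (f i) (hunit i) (hne i) (hf i) hperp
        (fun l => todot (γ l) k₀) ?_ hk₀ ?_
      · show todot (γ (f i)) k₀ = todot (γ i) k₀
        rw [hf, todot_neg]
      · refine hP.mono fun t ht => ?_
        have h1 := congrFun ht k₀
        simp only [Pdag, Finset.sum_apply, Pi.smul_apply, smul_eq_mul, Pi.zero_apply] at h1
        rw [← h1]
    · refine key_lemma m γ c i (f i) (hunit i) (hne i) (hf i) hperp
        (fun _ => 1) rfl one_ne_zero ?_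
      refine hσ.mono fun t ht => ?_
      simp only [mul_one]
      exact ht
  refine ⟨heven, hinv.toPerm f, ?_, ?_, ?_⟩
  · intro i
    simp only [Function.Involutive.coe_toPerm]
    exact hinv i
  · intro i
    simp only [Function.Involutive.coe_toPerm]
    exact hne i
  · intro i
    simp only [Function.Involutive.coe_toPerm]
    exact ⟨hf i, hci i⟩


/-- if for every unit vector `ξ` either `P†(ξ) = 0` or `σ(ξ) = 0`, then
the star configuration is symmetric: `m` is even and there is a fixed-point-free
involution `τ` with `γ_{τ(i)} = −γᵢ` and `c_{τ(i)} = cᵢ`. -/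
theorem non_invertible_implies_symmetric
    (m : ℕ) (hm : 1 ≤ m) (γ : Fin m → ℝ × ℝ) (c : Fin m → ℝ)
    (hunit : ∀ i, (γ i).1 ^ 2 + (γ i).2 ^ 2 = 1)
    (hdist : Function.Injective γ)
    (hc : ∀ i, c i ≠ 0)
    (hsing : ∀ ξ : ℝ × ℝ, ξ.1 ^ 2 + ξ.2 ^ 2 = 1 →
      Pdag m γ c ξ = 0 ∨ sigmaP m γ c ξ = 0) :
    Even m ∧
      ∃ τ : Equiv.Perm (Fin m),
        (∀ i, τ (τ i) = i) ∧ (∀ i, τ i ≠ i) ∧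
          ∀ i, γ (τ i) = -γ i ∧ c (τ i) = c i := by
  exact non_invertible_implies_symmetric_aux m hm γ c hunit hdist hc hsing
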